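/- Fix p, d with pd < 1 and s ∈ ℝ, and for each k set q = (1−pd)/d^k + s/d^{2k}. If k is large enough, then for every A ∈ 𝒜, Σ_{A'} M(A, A')·|A'| ≤ 2|A|. -/

import Mathlib

open MeasureTheory ProbabilityTheory Filter

/-- Vertices of the tree `T_{d,k}`: finite sequences over `[d]`. The root is `[]`. -/
abbrev Vert (d : ℕ) := List (Fin d)

/-- A percolation configuration: a Boolean (open/closed) for every pair `(v, s)`;
the pair `(v, s)` represents the oriented edge from `v` to `v ++ s`.  Only pairs
with `s.length = 1` (short edges) or `s.length = k` (long edges) are actual edges. -/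
abbrev Config (d : ℕ) := (Vert d × List (Fin d)) → Bool

/-- One open oriented edge step from `v` to `w`. -/
def step (d k : ℕ) (ω : Config d) (v w : Vert d) : Prop :=
  ∃ s : List (Fin d), (s.length = 1 ∨ s.length = k) ∧ w = v ++ s ∧ ω (v, s) = true

/-- The cluster of a set `B` of vertices: all vertices reachable from `B`
by an oriented path of open edges (with the convention `B ⊆ cluster`). -/
def cluster (d k : ℕ) (ω : Config d) (B : Set (Vert d)) : Set (Vert d) :=
  {w | ∃ v ∈ B, Relation.ReflTransGen (step d k ω) v w}

/-- `μ` is the law of Bernoulli bond percolation on `T_{d,k}` in which,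
independently, every short edge is open with probability `p` and every
long edge is open with probability `q`. -/
def IsPercolation (d k : ℕ) (p q : ℝ) (μ : Measure (Config d)) : Prop :=
  IsProbabilityMeasure μ ∧
  iIndepFun (fun e (ω : Config d) => ω e) μ ∧
  (∀ v : Vert d, ∀ s : List (Fin d), s.length = 1 →
      (μ {ω | ω (v, s) = true}).toReal = p) ∧
  (∀ v : Vert d, ∀ s : List (Fin d), s.length = k →
      (μ {ω | ω (v, s) = true}).toReal = q)


/-- One open *short* edge step from `v` to `w`. -/
def shortStep (d : ℕ) (ω : Config d) (v w : Vert d) : Prop :=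
  ∃ s : List (Fin d), s.length = 1 ∧ w = v ++ s ∧ ω (v, s) = true

/-- `C_s^B`: the short cluster of `B`, i.e. all vertices reachable from `B` by oriented
open paths using only short edges (with `B ⊆ C_s^B`). -/
def shortCluster (d : ℕ) (ω : Config d) (B : Set (Vert d)) : Set (Vert d) :=
  {w | ∃ v ∈ B, Relation.ReflTransGen (shortStep d ω) v w}

/-- `C_ℓ^B`: the vertices outside `C_s^B` which are endpoints of open long edges
starting in `C_s^B`. -/
def longCluster (d k : ℕ) (ω : Config d) (B : Set (Vert d)) : Set (Vert d) :=
  {w | w ∉ shortCluster d ω B ∧ ∃ v ∈ shortCluster d ω B,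
    ∃ s : List (Fin d), s.length = k ∧ w = v ++ s ∧ ω (v, s) = true}

/-- `V^v`: the full subtree rooted at `v`. -/
def subtree {d : ℕ} (v : Vert d) : Set (Vert d) := {w | ∃ s : List (Fin d), w = v ++ s}

/-- `V_Γ^v`: the subtree of height `k - 1` rooted at `v`. -/
def gammaSet (d k : ℕ) (v : Vert d) : Set (Vert d) :=
  {w | ∃ s : List (Fin d), s.length < k ∧ w = v ++ s}

/-- A set `B` of vertices is admissible if `B ⊆ V_Γ^u` for some (necessarily unique)
`u ∈ B`, called the base of `B`. -/
def Admissible (d k : ℕ) (B : Set (Vert d)) : Prop :=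
  ∃ u ∈ B, B ⊆ gammaSet d k u

/-- The base `b(B)` of an admissible set `B`. -/
noncomputable def base (d k : ℕ) (B : Set (Vert d)) : Vert d :=
  haveI := Classical.dec (Admissible d k B)
  if h : Admissible d k B then h.choose else []

/-- The relation on `C_ℓ^B`: `u` and `v` are related iff there is `w ∈ C_ℓ^B` with
`u, v ∈ V^w` (for admissible `B` this is an equivalence relation on `C_ℓ^B`). -/
def longRel (d k : ℕ) (ω : Config d) (B : Set (Vert d)) (u v : Vert d) : Prop :=
  u ∈ longCluster d k ω B ∧ v ∈ longCluster d k ω B ∧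
    ∃ w ∈ longCluster d k ω B, u ∈ subtree w ∧ v ∈ subtree w

/-- `ℬ^B`: the collection of equivalence classes of `C_ℓ^B` under `longRel`. -/
def longClasses (d k : ℕ) (ω : Config d) (B : Set (Vert d)) : Set (Set (Vert d)) :=
  {S | ∃ u ∈ longCluster d k ω B, S = {v | longRel d k ω B u v}}

/-- The type `t(B)` of an admissible set `B`: the set of words that must be concatenated
with the base of `B` to produce `B`. -/
noncomputable def typeOf (d k : ℕ) (B : Set (Vert d)) : Set (Vert d) :=
  {v | v ∈ gammaSet d k ([] : Vert d) ∧ base d k B ++ v ∈ B}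

/-- `𝒜`: the set of types, i.e. admissible sets based at the root. -/
def typeSpace (d k : ℕ) : Set (Set (Vert d)) :=
  {A | ([] : Vert d) ∈ A ∧ A ⊆ gammaSet d k ([] : Vert d)}

open scoped ENNReal
open MeasureTheory in
/-- The mean offspring matrix of the exploration branching process:
`M(A, A') = E[#{B' ∈ ℬ^B : t(B') = A'}]` for `B` an admissible set of type `A`
(we take the canonical representative `B = A`, which is admissible with base the root). -/
noncomputable def meanOffspring (d k : ℕ) (μ : Measure (Config d))
    (A A' : Set (Vert d)) : ℝ≥0∞ :=
  ∫⁻ ω, ({B' | B' ∈ longClasses d k ω A ∧ typeOf d k B' = A'}.encard : ℕ∞) ∂μ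

open MeasureTheory in
/-- `M̄(A)`: the expected number of vertices `v ∈ C_ℓ^{{o}}` such that
`C_ℓ^{{o}} ∩ V^v ⊇ {v·u : u ∈ A}`. -/
noncomputable def meanUpper (d k : ℕ) (μ : Measure (Config d))
    (A : Set (Vert d)) : ℝ≥0∞ :=
  ∫⁻ ω, ({v | v ∈ longCluster d k ω {([] : Vert d)} ∧
      ∀ u ∈ A, v ++ u ∈ longCluster d k ω {([] : Vert d)}}.encard : ℕ∞) ∂μ

/-- The height `h(A) = sup_{v ∈ A} h(v)` of a set of vertices. -/
noncomputable def heightSet {d : ℕ} (A : Set (Vert d)) : ℕ :=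
  sSup (List.length '' A)

/-- The parametrization `q = (1-pd)/d^k + s/d^{2k}` of Section 3.3. -/
noncomputable def qparam (d : ℕ) (p s : ℝ) (k : ℕ) : ℝ :=
  (1 - p * d) / (d : ℝ) ^ k + s / (d : ℝ) ^ (2 * k)


section Path
variable {d : ℕ}

/-- `pathOpen ω u w` : all the short edges along the path from `u` to `u ++ w` are open. -/
def pathOpen (ω : Config d) : Vert d → List (Fin d) → Prop
  | _, [] => True
  | u, a :: t => ω (u, [a]) = true ∧ pathOpen ω (u ++ [a]) t

lemma pathOpen_snoc {ω : Config d} {u w : Vert d} {a : Fin d}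
    (h : pathOpen ω u w) (ha : ω (u ++ w, [a]) = true) : pathOpen ω u (w ++ [a]) := by
  induction w generalizing u with
  | nil => exact ⟨by simpa using ha, trivial⟩
  | cons b t ih =>
    refine ⟨h.1, ih h.2 ?_⟩
    simpa [List.append_assoc] using ha

lemma pathOpen_reflTransGen {ω : Config d} {u w : Vert d} (h : pathOpen ω u w) :
    Relation.ReflTransGen (shortStep d ω) u (u ++ w) := by
  induction w generalizing u with
  | nil => simpa using Relation.ReflTransGen.refl
  | cons a t ih =>
    have : Relation.ReflTransGen (shortStep d ω) (u ++ [a]) ((u ++ [a]) ++ t) := ih h.2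
    refine Relation.ReflTransGen.head ⟨[a], rfl, rfl, h.1⟩ ?_
    simpa [List.append_assoc] using this

lemma reflTransGen_iff_pathOpen {ω : Config d} {u v : Vert d} :
    Relation.ReflTransGen (shortStep d ω) u v ↔ ∃ w, v = u ++ w ∧ pathOpen ω u w := by
  constructor
  · intro h
    induction h with
    | refl => exact ⟨[], by simp, trivial⟩
    | tail _ hstep ih =>
      obtain ⟨w, rfl, hw⟩ := ih
      obtain ⟨sg, hs1, rfl, hopen⟩ := hstep
      obtain ⟨a, rfl⟩ : ∃ a, sg = [a] := by
        match sg, hs1 with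
        | [a], _ => exact ⟨a, rfl⟩
      exact ⟨w ++ [a], by simp [List.append_assoc], pathOpen_snoc hw hopen⟩
  · rintro ⟨w, rfl, hw⟩
    exact pathOpen_reflTransGen hw

lemma mem_shortCluster_iff {ω : Config d} {B : Set (Vert d)} {v : Vert d} :
    v ∈ shortCluster d ω B ↔ ∃ u ∈ B, ∃ w, v = u ++ w ∧ pathOpen ω u w := by
  constructor
  · rintro ⟨u, hu, h⟩
    exact ⟨u, hu, (reflTransGen_iff_pathOpen).1 h⟩
  · rintro ⟨u, hu, w, rfl, hw⟩
    exact ⟨u, hu, pathOpen_reflTransGen hw⟩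

lemma pathOpen_iff_forall {ω : Config d} {u : Vert d} {w : List (Fin d)} :
    pathOpen ω u w ↔ ∀ i < w.length, ω (u ++ w.take i, (w.drop i).take 1) = true := by
  induction w generalizing u with
  | nil => simp [pathOpen]
  | cons a t ih =>
    constructor
    · rintro ⟨h1, h2⟩ i hi
      cases i with
      | zero => simpa using h1
      | succ j =>
        have := (ih.1 h2) j (by simpa using hi)
        simpa [List.append_assoc] using this
    · intro h
      refine ⟨by simpa using h 0 (by simp), ih.2 ?_⟩
      intro j hj
      have := h (j + 1) (by simpa using hj)
      simpa [List.append_assoc] using this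
end Path

section LongRel
variable {d k : ℕ} {ω : Config d} {B : Set (Vert d)}

lemma longRel_symm {u v : Vert d} (h : longRel d k ω B u v) : longRel d k ω B v u := by
  obtain ⟨hu, hv, w, hw, h1, h2⟩ := h
  exact ⟨hv, hu, w, hw, h2, h1⟩

lemma longRel_trans {u v x : Vert d} (h1 : longRel d k ω B u v) (h2 : longRel d k ω B v x) :
    longRel d k ω B u x := by
  obtain ⟨hu, hv, w1, hw1, huw1, hvw1⟩ := h1
  obtain ⟨_, hx, w2, hw2, hvw2, hxw2⟩ := h2
  obtain ⟨t1, rfl⟩ := hvw1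
  obtain ⟨t2, ht2⟩ := hvw2
  have hcomp : w1 <+: w2 ∨ w2 <+: w1 :=
    List.prefix_or_prefix_of_prefix ⟨t1, rfl⟩ ⟨t2, ht2.symm⟩
  rcases hcomp with ⟨r, rfl⟩ | ⟨r, rfl⟩
  · obtain ⟨t3, ht3⟩ := hxw2
    exact ⟨hu, hx, w1, hw1, huw1, ⟨r ++ t3, by simp [ht3]⟩⟩
  · obtain ⟨t3, ht3⟩ := huw1
    exact ⟨hu, hx, w2, hw2, ⟨r ++ t3, by simp [ht3]⟩, hxw2⟩

lemma class_eq_of_mem {u1 u2 x : Vert d}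
    (h1 : longRel d k ω B u1 x) (h2 : longRel d k ω B u2 x) :
    {v | longRel d k ω B u1 v} = {v | longRel d k ω B u2 v} := by
  ext v
  constructor
  · intro hv; exact longRel_trans (longRel_trans h2 (longRel_symm h1)) hv
  · intro hv; exact longRel_trans (longRel_trans h1 (longRel_symm h2)) hv

lemma mem_longCluster_of_mem_class {S : Set (Vert d)} (hS : S ∈ longClasses d k ω B)
    {x : Vert d} (hx : x ∈ S) : x ∈ longCluster d k ω B := by
  obtain ⟨u, hu, rfl⟩ := hS
  exact hx.2.1

end LongRel

open scoped ENNReal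

lemma encard_le_tsum_of_injOn {α ι : Type*} {S : Set α} {F : α → ι} {g : ι → ℝ≥0∞}
    (hinj : Set.InjOn F S) (hg : ∀ x ∈ S, 1 ≤ g (F x)) :
    (S.encard : ℝ≥0∞) ≤ ∑' i, g i := by
  rw [← ENNReal.tsum_set_one]
  calc ∑' x : S, (1 : ℝ≥0∞) ≤ ∑' x : S, g (F x.1) :=
        ENNReal.tsum_le_tsum fun x => hg x.1 x.2
    _ ≤ ∑' i, g i := ENNReal.tsum_comp_le_tsum_of_injective hinj.injective _

/-- The pointwise (per-configuration) bound of step 1: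
the sum over types `A'` of (number of classes of type `A'`) times `|A'|`
is at most the cardinality of the long cluster. -/
lemma pointwise_class_bound (d k : ℕ) (ω : Config d) (A : Set (Vert d)) :
    ∑' A' : {A' : Set (Vert d) // A' ∈ typeSpace d k},
        (({B' | B' ∈ longClasses d k ω A ∧ typeOf d k B' = A'.1}.encard : ℕ∞) : ℝ≥0∞)
          * ((A'.1.encard : ℕ∞) : ℝ≥0∞)
      ≤ ((longCluster d k ω A).encard : ℝ≥0∞) := by
  classical
  have hrw : ∀ A' : {A' : Set (Vert d) // A' ∈ typeSpace d k},
      (({B' | B' ∈ longClasses d k ω A ∧ typeOf d k B' = A'.1}.encard : ℕ∞) : ℝ≥0∞)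
          * ((A'.1.encard : ℕ∞) : ℝ≥0∞)
        = ∑' _B' : {B' | B' ∈ longClasses d k ω A ∧ typeOf d k B' = A'.1},
            ∑' _v : A'.1, (1 : ℝ≥0∞) := by
    intro A'
    rw [ENNReal.tsum_set_one, ENNReal.tsum_set_const]
  calc ∑' A' : {A' : Set (Vert d) // A' ∈ typeSpace d k},
        (({B' | B' ∈ longClasses d k ω A ∧ typeOf d k B' = A'.1}.encard : ℕ∞) : ℝ≥0∞)
          * ((A'.1.encard : ℕ∞) : ℝ≥0∞)
      = ∑' A' : {A' : Set (Vert d) // A' ∈ typeSpace d k},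
          ∑' _B' : {B' | B' ∈ longClasses d k ω A ∧ typeOf d k B' = A'.1},
            ∑' _v : A'.1, (1 : ℝ≥0∞) := tsum_congr hrw
    _ = ∑' p : (Σ A' : {A' : Set (Vert d) // A' ∈ typeSpace d k},
          {B' | B' ∈ longClasses d k ω A ∧ typeOf d k B' = A'.1}),
            ∑' _v : p.1.1, (1 : ℝ≥0∞) :=
        (ENNReal.tsum_sigma (fun (A' : {A' : Set (Vert d) // A' ∈ typeSpace d k})
          (_B' : {B' | B' ∈ longClasses d k ω A ∧ typeOf d k B' = A'.1}) =>
            ∑' _v : A'.1, (1 : ℝ≥0∞))).symm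
    _ = ∑' q : (Σ p : (Σ A' : {A' : Set (Vert d) // A' ∈ typeSpace d k},
          {B' | B' ∈ longClasses d k ω A ∧ typeOf d k B' = A'.1}), p.1.1),
            (1 : ℝ≥0∞) :=
        (ENNReal.tsum_sigma (fun (p : (Σ A' : {A' : Set (Vert d) // A' ∈ typeSpace d k},
          {B' | B' ∈ longClasses d k ω A ∧ typeOf d k B' = A'.1})) (_v : p.1.1) =>
            (1 : ℝ≥0∞))).symm
    _ ≤ ((longCluster d k ω A).encard : ℝ≥0∞) := ?_
  rw [← ENNReal.tsum_set_one]
  have key : ∀ q : (Σ p : (Σ A' : {A' : Set (Vert d) // A' ∈ typeSpace d k},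
      {B' | B' ∈ longClasses d k ω A ∧ typeOf d k B' = A'.1}), p.1.1),
      (base d k q.1.2.1 ++ q.2.1 : Vert d) ∈ longCluster d k ω A := by
    rintro ⟨⟨A', B'⟩, v⟩
    have hv : v.1 ∈ typeOf d k B'.1 := by rw [B'.2.2]; exact v.2
    exact mem_longCluster_of_mem_class B'.2.1 hv.2
  have hGinj : Function.Injective
      (fun q : (Σ p : (Σ A' : {A' : Set (Vert d) // A' ∈ typeSpace d k},
          {B' | B' ∈ longClasses d k ω A ∧ typeOf d k B' = A'.1}), p.1.1) =>
        (⟨base d k q.1.2.1 ++ q.2.1, key q⟩ : (longCluster d k ω A : Set (Vert d)))) := by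
    rintro ⟨⟨A1, B1⟩, v1⟩ ⟨⟨A2, B2⟩, v2⟩ h
    have hval : base d k B1.1 ++ v1.1 = base d k B2.1 ++ v2.1 :=
      congrArg Subtype.val h
    have hx1 : base d k B1.1 ++ v1.1 ∈ B1.1 := by
      have hv : v1.1 ∈ typeOf d k B1.1 := by rw [B1.2.2]; exact v1.2
      exact hv.2
    have hx2 : base d k B1.1 ++ v1.1 ∈ B2.1 := by
      rw [hval]
      have hv : v2.1 ∈ typeOf d k B2.1 := by rw [B2.2.2]; exact v2.2
      exact hv.2
    have hBB : B1.1 = B2.1 := by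
      obtain ⟨u1, hu1, he1⟩ := B1.2.1
      obtain ⟨u2, hu2, he2⟩ := B2.2.1
      have hx1' : base d k B1.1 ++ v1.1 ∈ {v | longRel d k ω A u1 v} := by
        rw [← he1]; exact hx1
      have hx2' : base d k B1.1 ++ v1.1 ∈ {v | longRel d k ω A u2 v} := by
        rw [← he2]; exact hx2
      rw [he1, he2]
      exact class_eq_of_mem hx1' hx2'
    have hAA : A1 = A2 := Subtype.ext (by rw [← B1.2.2, ← B2.2.2, hBB])
    subst hAA
    have hBB' : B1 = B2 := Subtype.ext hBB
    subst hBB'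
    have hvv : v1 = v2 := Subtype.ext (List.append_cancel_left hval)
    subst hvv
    rfl
  simpa using ENNReal.tsum_comp_le_tsum_of_injective hGinj (fun _ => (1 : ℝ≥0∞))

section Meas
variable {d k : ℕ}

lemma measurableSet_coord (e : Vert d × List (Fin d)) :
    MeasurableSet {ω : Config d | ω e = true} := by
  have : {ω : Config d | ω e = true} = (fun ω : Config d => ω e) ⁻¹' {true} := by
    ext ω; simp
  rw [this]
  exact (measurable_pi_apply e) (by trivial)

lemma measurableSet_pathOpen (u : Vert d) (w : List (Fin d)) :
    MeasurableSet {ω : Config d | pathOpen ω u w} := by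
  induction w generalizing u with
  | nil => simp [pathOpen]
  | cons a t ih =>
    have : {ω : Config d | pathOpen ω u (a :: t)}
        = {ω : Config d | ω (u, [a]) = true} ∩ {ω : Config d | pathOpen ω (u ++ [a]) t} := by
      ext ω; simp [pathOpen, Set.mem_setOf_eq]
    rw [this]
    exact (measurableSet_coord _).inter (ih _)

lemma measurableSet_mem_shortCluster (B : Set (Vert d)) (v : Vert d) :
    MeasurableSet {ω : Config d | v ∈ shortCluster d ω B} := by
  have : {ω : Config d | v ∈ shortCluster d ω B}
      = ⋃ uw : {uw : Vert d × Vert d // uw.1 ∈ B ∧ v = uw.1 ++ uw.2},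
          {ω : Config d | pathOpen ω uw.1.1 uw.1.2} := by
    ext ω
    simp only [Set.mem_setOf_eq, Set.mem_iUnion, mem_shortCluster_iff]
    constructor
    · rintro ⟨u, hu, w, hvw, hw⟩; exact ⟨⟨(u, w), hu, hvw⟩, hw⟩
    · rintro ⟨⟨⟨u, w⟩, hu, hvw⟩, hw⟩; exact ⟨u, hu, w, hvw, hw⟩
  rw [this]
  exact MeasurableSet.iUnion fun uw => measurableSet_pathOpen _ _

end Meas

section Indep
open scoped ENNReal

lemma coord_comap_measurableSet {d : ℕ} (e : Vert d × List (Fin d)) :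
    MeasurableSet[MeasurableSpace.comap (fun ω : Config d => ω e) inferInstance]
      {ω : Config d | ω e = true} :=
  ⟨{true}, by trivial, by ext ω; simp⟩

lemma meas_coord_short {d k : ℕ} {p q : ℝ} {μ : Measure (Config d)}
    (hμ : IsPercolation d k p q μ) {v : Vert d} {s : List (Fin d)} (hs : s.length = 1) :
    μ {ω : Config d | ω (v, s) = true} = ENNReal.ofReal p := by
  haveI := hμ.1
  rw [← hμ.2.2.1 v s hs]
  exact (ENNReal.ofReal_toReal (measure_ne_top μ _)).symm

lemma meas_coord_long {d k : ℕ} {p q : ℝ} {μ : Measure (Config d)}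
    (hμ : IsPercolation d k p q μ) {v : Vert d} {s : List (Fin d)} (hs : s.length = k) :
    μ {ω : Config d | ω (v, s) = true} = ENNReal.ofReal q := by
  haveI := hμ.1
  rw [← hμ.2.2.2 v s hs]
  exact (ENNReal.ofReal_toReal (measure_ne_top μ _)).symm

/-- The probability that a given short path is fully open and a given long edge
from its endpoint is open. -/
lemma meas_pathOpen_inter_long {d k : ℕ} {p q : ℝ} {μ : Measure (Config d)}
    (hμ : IsPercolation d k p q μ) (hk : 2 ≤ k) (u : Vert d) (w : Vert d)
    (s : List (Fin d)) (hs : s.length = k) :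
    μ ({ω : Config d | pathOpen ω u w} ∩ {ω : Config d | ω (u ++ w, s) = true})
      = ENNReal.ofReal p ^ w.length * ENNReal.ofReal q := by
  classical
  set n := w.length with hn
  set eIdx : ℕ → Vert d × List (Fin d) := fun i => (u ++ w.take i, (w.drop i).take 1) with heIdx
  have hlen1 : ∀ i < n, (eIdx i).2.length = 1 := by
    intro i hi
    simp only [heIdx, List.length_take, List.length_drop]
    omega
  set F : Finset (Vert d × List (Fin d)) :=
    insert (u ++ w, s) ((Finset.range n).image eIdx) with hF
  have hnotmem : (u ++ w, s) ∉ (Finset.range n).image eIdx := by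
    intro hmem
    obtain ⟨i, hi, he⟩ := Finset.mem_image.1 hmem
    have := hlen1 i (Finset.mem_range.1 hi)
    rw [he] at this
    simp only at this
    omega
  have hinj : ∀ i ∈ Finset.range n, ∀ j ∈ Finset.range n, eIdx i = eIdx j → i = j := by
    intro i hi j hj he
    have h1 : (u ++ w.take i).length = (u ++ w.take j).length := by
      rw [show (u ++ w.take i) = (eIdx i).1 from rfl, he]
    simp only [List.length_append, List.length_take] at h1
    have hi' := Finset.mem_range.1 hi
    have hj' := Finset.mem_range.1 hj
    omega
  -- the event as an intersection of coordinate events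
  have hevent : {ω : Config d | pathOpen ω u w} ∩ {ω : Config d | ω (u ++ w, s) = true}
      = ⋂ e ∈ F, {ω : Config d | ω e = true} := by
    ext ω
    simp only [Set.mem_inter_iff, Set.mem_setOf_eq, Set.mem_iInter, hF, Finset.mem_insert,
      Finset.mem_image, Finset.mem_range, pathOpen_iff_forall]
    constructor
    · rintro ⟨hpath, hlong⟩ e he
      rcases he with rfl | ⟨i, hi, rfl⟩
      · exact hlong
      · exact hpath i hi
    · intro h
      refine ⟨fun i hi => h (eIdx i) (Or.inr ⟨i, hi, rfl⟩), h (u ++ w, s) (Or.inl rfl)⟩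
  rw [hevent]
  rw [hμ.2.1.iIndep.meas_biInter (S := F)
    (fun e _ => coord_comap_measurableSet e)]
  rw [hF, Finset.prod_insert hnotmem, Finset.prod_image hinj]
  have hshortval : ∀ i ∈ Finset.range n,
      μ {ω : Config d | ω (eIdx i) = true} = ENNReal.ofReal p := by
    intro i hi
    exact meas_coord_short hμ (hlen1 i (Finset.mem_range.1 hi))
  rw [Finset.prod_congr rfl hshortval, Finset.prod_const, Finset.card_range,
    meas_coord_long hμ hs, mul_comm]
end Indep

section Count
open scoped ENNReal

lemma tsum_length_fun (d : ℕ) (f : ℕ → ℝ≥0∞) :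
    ∑' w : List (Fin d), f w.length = ∑' n : ℕ, (d : ℝ≥0∞) ^ n * f n := by
  have h1 : ∑' w : List (Fin d), f w.length
      = ∑' σ : Σ n : ℕ, (Fin n → Fin d), f σ.1 := by
    rw [← Equiv.tsum_eq (List.equivSigmaTuple (α := Fin d)) (fun σ => f σ.1)]
    rfl
  rw [h1, ENNReal.tsum_sigma (fun n (_ : Fin n → Fin d) => f n)]
  congr 1
  ext n
  rw [tsum_fintype, Finset.sum_const, Finset.card_univ, Fintype.card_fun]
  simp [nsmul_eq_mul, mul_comm]

lemma tsum_pow_length (d : ℕ) (x : ℝ≥0∞) :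
    ∑' w : List (Fin d), x ^ w.length = (1 - (d : ℝ≥0∞) * x)⁻¹ := by
  rw [tsum_length_fun d (fun n => x ^ n)]
  rw [← ENNReal.tsum_geometric ((d : ℝ≥0∞) * x)]
  congr 1
  ext n
  rw [mul_pow]

lemma tsum_ite_length (d k : ℕ) (c : ℝ≥0∞) :
    ∑' w : List (Fin d), (if w.length = k then c else 0) = (d : ℝ≥0∞) ^ k * c := by
  rw [tsum_length_fun d (fun n => if n = k then c else 0)]
  rw [tsum_eq_single k]
  · simp
  · intro n hn; simp [hn]

lemma gammaSet_finite (d k : ℕ) (v : Vert d) : (gammaSet d k v).Finite := by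
  have : gammaSet d k v ⊆ (fun s => v ++ s) '' {l : List (Fin d) | l.length < k} := by
    rintro w ⟨s, hs, rfl⟩
    exact ⟨s, hs, rfl⟩
  exact ((List.finite_length_lt (Fin d) k).image _).subset this

lemma typeSpace_finite (d k : ℕ) : (typeSpace d k).Finite := by
  have : typeSpace d k ⊆ {S | S ⊆ gammaSet d k ([] : Vert d)} := fun A hA => hA.2
  exact (Set.Finite.finite_subsets (gammaSet_finite d k ([] : Vert d))).subset this

open MeasureTheory in
lemma tsum_lintegral_le {α : Type*} [MeasurableSpace α] (μ : Measure α) {ι : Type*} [Countable ι]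
    (f : ι → α → ℝ≥0∞) : ∑' i, ∫⁻ a, f i a ∂μ ≤ ∫⁻ a, ∑' i, f i a ∂μ := by
  choose g hgmeas hgle hgint using fun i => exists_measurable_le_lintegral_eq μ (f i)
  calc ∑' i, ∫⁻ a, f i a ∂μ = ∑' i, ∫⁻ a, g i a ∂μ := by
        exact tsum_congr fun i => hgint i
    _ = ∫⁻ a, ∑' i, g i a ∂μ := (lintegral_tsum fun i => (hgmeas i).aemeasurable).symm
    _ ≤ ∫⁻ a, ∑' i, f i a ∂μ :=
        lintegral_mono fun a => ENNReal.tsum_le_tsum fun i => hgle i a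
end Count

section Expect
open scoped ENNReal Classical
open MeasureTheory

/-- Union bound: probability that `v` is in the short cluster of `B` and the long
edge `(v, s)` is open. -/
lemma meas_shortCluster_long_le {d k : ℕ} {p q : ℝ} {μ : Measure (Config d)}
    (hμ : IsPercolation d k p q μ) (hk : 2 ≤ k) (B : Set (Vert d)) (v : Vert d)
    (s : List (Fin d)) (hs : s.length = k) :
    μ ({ω : Config d | v ∈ shortCluster d ω B} ∩ {ω : Config d | ω (v, s) = true})
      ≤ ∑' uw : Vert d × Vert d,
          (if uw.1 ∈ B ∧ v = uw.1 ++ uw.2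
            then ENNReal.ofReal p ^ uw.2.length * ENNReal.ofReal q else 0) := by
  classical
  have hsub : {ω : Config d | v ∈ shortCluster d ω B} ∩ {ω : Config d | ω (v, s) = true}
      ⊆ ⋃ uw : {uw : Vert d × Vert d // uw.1 ∈ B ∧ v = uw.1 ++ uw.2},
          ({ω : Config d | pathOpen ω uw.1.1 uw.1.2}
            ∩ {ω : Config d | ω (uw.1.1 ++ uw.1.2, s) = true}) := by
    rintro ω ⟨hωv, hωs⟩
    obtain ⟨u, hu, w, hvw, hw⟩ := mem_shortCluster_iff.1 hωv
    refine Set.mem_iUnion.2 ⟨⟨(u, w), hu, hvw⟩, hw, ?_⟩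
    simpa [← hvw] using hωs
  calc μ ({ω : Config d | v ∈ shortCluster d ω B} ∩ {ω : Config d | ω (v, s) = true})
      ≤ ∑' uw : {uw : Vert d × Vert d // uw.1 ∈ B ∧ v = uw.1 ++ uw.2},
          μ ({ω : Config d | pathOpen ω uw.1.1 uw.1.2}
            ∩ {ω : Config d | ω (uw.1.1 ++ uw.1.2, s) = true}) :=
        le_trans (measure_mono hsub) (measure_iUnion_le _)
    _ = ∑' uw : {uw : Vert d × Vert d // uw.1 ∈ B ∧ v = uw.1 ++ uw.2},
          (fun uw' : Vert d × Vert d =>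
            (if uw'.1 ∈ B ∧ v = uw'.1 ++ uw'.2
              then ENNReal.ofReal p ^ uw'.2.length * ENNReal.ofReal q else 0)) uw.1 := by
        refine tsum_congr fun uw => ?_
        rw [meas_pathOpen_inter_long hμ hk uw.1.1 uw.1.2 s hs]
        simp [uw.2]
    _ ≤ _ := ENNReal.tsum_comp_le_tsum_of_injective Subtype.val_injective _

/-- Expected size of the long cluster. -/
lemma lintegral_encard_longCluster_le {d k : ℕ} {p q : ℝ} {μ : Measure (Config d)}
    (hμ : IsPercolation d k p q μ) (hk : 2 ≤ k) (B : Set (Vert d)) :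
    ∫⁻ ω, ((longCluster d k ω B).encard : ℝ≥0∞) ∂μ
      ≤ (B.encard : ℝ≥0∞) * ((1 - (d : ℝ≥0∞) * ENNReal.ofReal p)⁻¹
          * ((d : ℝ≥0∞) ^ k * ENNReal.ofReal q)) := by
  classical
  set ind : Vert d × Vert d → Config d → ℝ≥0∞ := fun vs ω =>
    if vs.2.length = k ∧ vs.1 ∈ shortCluster d ω B ∧ ω (vs.1, vs.2) = true then 1 else 0
    with hind
  -- pointwise bound
  have hpoint : ∀ ω : Config d,
      ((longCluster d k ω B).encard : ℝ≥0∞) ≤ ∑' vs : Vert d × Vert d, ind vs ω := by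
    intro ω
    refine encard_le_tsum_of_injOn (F := fun w : Vert d =>
      ((w.take (w.length - k), w.drop (w.length - k)) : Vert d × Vert d)) ?_ ?_
    · intro x hx y hy hxy
      have h1 : x.take (x.length - k) = y.take (y.length - k) := congrArg Prod.fst hxy
      have h2 : x.drop (x.length - k) = y.drop (y.length - k) := congrArg Prod.snd hxy
      rw [← List.take_append_drop (x.length - k) x, h1, h2, List.take_append_drop]
    · rintro x ⟨hxout, u, hu, t, ht, rfl, hopen⟩
      have hlen : (u ++ t).length - k = u.length := by
        simp [List.length_append, ht]
      have htake : (u ++ t).take ((u ++ t).length - k) = u := by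
        rw [hlen]; exact List.take_left
      have hdrop : (u ++ t).drop ((u ++ t).length - k) = t := by
        rw [hlen]; exact List.drop_left
      simp only [hind, htake, hdrop]
      rw [if_pos ⟨ht, hu, hopen⟩]
  -- measurability of the indicators
  have hmeas : ∀ vs : Vert d × Vert d, Measurable (ind vs) := by
    intro vs
    have : ind vs = Set.indicator ({ω : Config d | vs.1 ∈ shortCluster d ω B}
        ∩ {ω : Config d | ω (vs.1, vs.2) = true}) (fun _ => if vs.2.length = k then 1 else 0) := by
      ext ω
      by_cases h1 : vs.2.length = k <;>
        by_cases h2 : vs.1 ∈ shortCluster d ω B ∧ ω (vs.1, vs.2) = true <;>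
          simp [hind, Set.indicator_apply, h1, h2, Set.mem_inter_iff, Set.mem_setOf_eq,
            and_comm, and_assoc] <;> tauto
    rw [this]
    exact (measurable_const.indicator
      ((measurableSet_mem_shortCluster B vs.1).inter (measurableSet_coord (vs.1, vs.2))))
  calc ∫⁻ ω, ((longCluster d k ω B).encard : ℝ≥0∞) ∂μ
      ≤ ∫⁻ ω, ∑' vs : Vert d × Vert d, ind vs ω ∂μ := lintegral_mono hpoint
    _ = ∑' vs : Vert d × Vert d, ∫⁻ ω, ind vs ω ∂μ :=
        lintegral_tsum fun vs => (hmeas vs).aemeasurable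
    _ ≤ ∑' vs : Vert d × Vert d, (if vs.2.length = k then
          ∑' uw : Vert d × Vert d,
            (if uw.1 ∈ B ∧ vs.1 = uw.1 ++ uw.2
              then ENNReal.ofReal p ^ uw.2.length * ENNReal.ofReal q else 0) else 0) := by
        refine ENNReal.tsum_le_tsum fun vs => ?_
        by_cases h1 : vs.2.length = k
        · rw [if_pos h1]
          have : ∫⁻ ω, ind vs ω ∂μ
              = μ ({ω : Config d | vs.1 ∈ shortCluster d ω B}
                  ∩ {ω : Config d | ω (vs.1, vs.2) = true}) := by
            rw [← lintegral_indicator_one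
              (((measurableSet_mem_shortCluster B vs.1).inter (measurableSet_coord (vs.1, vs.2))))]
            refine lintegral_congr fun ω => ?_
            by_cases h2 : vs.1 ∈ shortCluster d ω B ∧ ω (vs.1, vs.2) = true <;>
              simp [hind, Set.indicator_apply, h1, h2, Set.mem_inter_iff, Set.mem_setOf_eq] <;>
                tauto
          rw [this]
          exact meas_shortCluster_long_le hμ hk B vs.1 vs.2 h1
        · have : ∫⁻ ω, ind vs ω ∂μ = 0 := by
            rw [show (fun ω => ind vs ω) = (fun _ => 0) from ?_, lintegral_zero]
            ext ω
            simp [hind, h1]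
          rw [this, if_neg h1]
    _ = (B.encard : ℝ≥0∞) * ((1 - (d : ℝ≥0∞) * ENNReal.ofReal p)⁻¹
          * ((d : ℝ≥0∞) ^ k * ENNReal.ofReal q)) := ?_
  -- now pure tsum arithmetic
  rw [ENNReal.tsum_prod']
  have hinner : ∀ v : Vert d, ∀ s : Vert d, (if s.length = k then
        ∑' uw : Vert d × Vert d,
          (if uw.1 ∈ B ∧ v = uw.1 ++ uw.2
            then ENNReal.ofReal p ^ uw.2.length * ENNReal.ofReal q else 0) else 0)
      = (if s.length = k then (1:ℝ≥0∞) else 0) *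
        ∑' uw : Vert d × Vert d,
          (if uw.1 ∈ B ∧ v = uw.1 ++ uw.2
            then ENNReal.ofReal p ^ uw.2.length * ENNReal.ofReal q else 0) := by
    intro v s
    by_cases h : s.length = k <;> simp [h]
  calc ∑' (v : Vert d) (s : Vert d), (if s.length = k then
        ∑' uw : Vert d × Vert d,
          (if uw.1 ∈ B ∧ v = uw.1 ++ uw.2
            then ENNReal.ofReal p ^ uw.2.length * ENNReal.ofReal q else 0) else 0)
      = ∑' v : Vert d, (d : ℝ≥0∞) ^ k *
          ∑' uw : Vert d × Vert d,
            (if uw.1 ∈ B ∧ v = uw.1 ++ uw.2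
              then ENNReal.ofReal p ^ uw.2.length * ENNReal.ofReal q else 0) := by
        refine tsum_congr fun v => ?_
        rw [tsum_congr (hinner v), ENNReal.tsum_mul_right, tsum_ite_length d k 1, mul_one]
    _ = (d : ℝ≥0∞) ^ k * ∑' (v : Vert d) (uw : Vert d × Vert d),
          (if uw.1 ∈ B ∧ v = uw.1 ++ uw.2
            then ENNReal.ofReal p ^ uw.2.length * ENNReal.ofReal q else 0) :=
        ENNReal.tsum_mul_left
    _ = (d : ℝ≥0∞) ^ k * ∑' (uw : Vert d × Vert d) (v : Vert d),
          (if uw.1 ∈ B ∧ v = uw.1 ++ uw.2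
            then ENNReal.ofReal p ^ uw.2.length * ENNReal.ofReal q else 0) := by
        rw [ENNReal.tsum_comm]
    _ = (d : ℝ≥0∞) ^ k * ∑' uw : Vert d × Vert d,
          (if uw.1 ∈ B then ENNReal.ofReal p ^ uw.2.length * ENNReal.ofReal q else 0) := by
        congr 1
        refine tsum_congr fun uw => ?_
        by_cases h : uw.1 ∈ B
        · simp only [h, true_and]
          exact tsum_ite_eq (uw.1 ++ uw.2) _
        · simp [h]
    _ = (d : ℝ≥0∞) ^ k * ∑' (u : Vert d) (w : Vert d),
          ((if u ∈ B then (1:ℝ≥0∞) else 0) *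
            (ENNReal.ofReal p ^ w.length * ENNReal.ofReal q)) := by
        rw [ENNReal.tsum_prod']
        congr 1
        refine tsum_congr fun u => tsum_congr fun w => ?_
        by_cases h : u ∈ B <;> simp [h]
    _ = (d : ℝ≥0∞) ^ k * ((B.encard : ℝ≥0∞) *
          ((1 - (d : ℝ≥0∞) * ENNReal.ofReal p)⁻¹ * ENNReal.ofReal q)) := by
        congr 1
        have h1 : ∀ u : Vert d, ∑' w : Vert d,
            ((if u ∈ B then (1:ℝ≥0∞) else 0) *
              (ENNReal.ofReal p ^ w.length * ENNReal.ofReal q))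
            = (if u ∈ B then (1:ℝ≥0∞) else 0) *
              ((1 - (d : ℝ≥0∞) * ENNReal.ofReal p)⁻¹ * ENNReal.ofReal q) := by
          intro u
          rw [ENNReal.tsum_mul_left]
          congr 1
          rw [ENNReal.tsum_mul_right, tsum_pow_length]
        rw [tsum_congr h1, ENNReal.tsum_mul_right]
        congr 1
        have : ∀ u : Vert d, (if u ∈ B then (1:ℝ≥0∞) else 0)
            = Set.indicator B (fun _ => (1:ℝ≥0∞)) u := by
          intro u; rw [Set.indicator_apply]
        rw [tsum_congr this, ← tsum_subtype B (fun _ => (1:ℝ≥0∞)), ENNReal.tsum_set_one]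
    _ = (B.encard : ℝ≥0∞) * ((1 - (d : ℝ≥0∞) * ENNReal.ofReal p)⁻¹
          * ((d : ℝ≥0∞) ^ k * ENNReal.ofReal q)) := by ring
end Expect

section Aux
open scoped ENNReal
open MeasureTheory

lemma encard_cast_ne_top {d : ℕ} {S : Set (Vert d)} (h : S.Finite) :
    ((S.encard : ℕ∞) : ℝ≥0∞) ≠ ⊤ := by
  have h2 : ((S.encard : ℕ∞) : ℝ≥0∞) < ((⊤ : ℕ∞) : ℝ≥0∞) :=
    ENat.toENNReal_lt.2 (Set.Finite.encard_lt_top h)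
  rw [ENat.toENNReal_top] at h2
  exact ne_top_of_lt h2

/-- Row-sum bound for the mean offspring matrix at a fixed `k`. -/
lemma row_sum_le_aux {d k : ℕ} {p q : ℝ} {μ : Measure (Config d)}
    (hμ : IsPercolation d k p q μ) (hk : 2 ≤ k)
    (A : Set (Vert d)) (hA : A ∈ typeSpace d k) :
    ∑' A' : {A' : Set (Vert d) // A' ∈ typeSpace d k},
        meanOffspring d k μ A A'.1 * ((A'.1.encard : ℕ∞) : ℝ≥0∞)
      ≤ (A.encard : ℝ≥0∞) * ((1 - (d : ℝ≥0∞) * ENNReal.ofReal p)⁻¹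
          * ((d : ℝ≥0∞) ^ k * ENNReal.ofReal q)) := by
  haveI : Countable {A' : Set (Vert d) // A' ∈ typeSpace d k} :=
    (Set.Finite.to_subtype (typeSpace_finite d k)).to_countable
  have hterm : ∀ A' : {A' : Set (Vert d) // A' ∈ typeSpace d k},
      meanOffspring d k μ A A'.1 * ((A'.1.encard : ℕ∞) : ℝ≥0∞)
        = ∫⁻ ω, (({B' | B' ∈ longClasses d k ω A ∧ typeOf d k B' = A'.1}.encard : ℕ∞) : ℝ≥0∞)
            * ((A'.1.encard : ℕ∞) : ℝ≥0∞) ∂μ := by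
    intro A'
    rw [meanOffspring, lintegral_mul_const' _ _
      (encard_cast_ne_top ((gammaSet_finite d k ([] : Vert d)).subset A'.2.2))]
  calc ∑' A' : {A' : Set (Vert d) // A' ∈ typeSpace d k},
        meanOffspring d k μ A A'.1 * ((A'.1.encard : ℕ∞) : ℝ≥0∞)
      = ∑' A' : {A' : Set (Vert d) // A' ∈ typeSpace d k},
          ∫⁻ ω, (({B' | B' ∈ longClasses d k ω A ∧ typeOf d k B' = A'.1}.encard : ℕ∞) : ℝ≥0∞)
            * ((A'.1.encard : ℕ∞) : ℝ≥0∞) ∂μ := tsum_congr hterm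
    _ ≤ ∫⁻ ω, ∑' A' : {A' : Set (Vert d) // A' ∈ typeSpace d k},
          (({B' | B' ∈ longClasses d k ω A ∧ typeOf d k B' = A'.1}.encard : ℕ∞) : ℝ≥0∞)
            * ((A'.1.encard : ℕ∞) : ℝ≥0∞) ∂μ := tsum_lintegral_le μ _
    _ ≤ ∫⁻ ω, ((longCluster d k ω A).encard : ℝ≥0∞) ∂μ :=
        lintegral_mono fun ω => pointwise_class_bound d k ω A
    _ ≤ _ := lintegral_encard_longCluster_le hμ hk A
end Aux

/-- **Lemma 3.8** (de Lima–Szabó–Valesin): under the parametrization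
`q = (1-pd)/d^k + s/d^{2k}`, if `k` is large enough then for every type `A ∈ 𝒜`,
`Σ_{A'} M(A, A')·|A'| ≤ 2|A|`. -/
theorem mean_row_sum_le (d : ℕ) (hd : 2 ≤ d)
    (p : ℝ) (hp0 : 0 ≤ p) (hpd : p * d < 1) (s : ℝ)
    (μ : ℕ → Measure (Config d))
    (hμ : ∀ k, 2 ≤ k → qparam d p s k ∈ Set.Icc (0 : ℝ) 1 →
      IsPercolation d k p (qparam d p s k) (μ k)) :
    ∃ K : ℕ, ∀ k, K ≤ k → ∀ A ∈ typeSpace d k,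
      ∑' A' : {A' : Set (Vert d) // A' ∈ typeSpace d k},
          meanOffspring d k (μ k) A A'.1 * ((A'.1.encard : ℕ∞) : ℝ≥0∞) ≤
        2 * ((A.encard : ℕ∞) : ℝ≥0∞) := by
  set c : ℝ := 1 - p * d with hc_def
  have hc : 0 < c := by simp [hc_def]; linarith
  have hc1 : c ≤ 1 := by
    have : 0 ≤ p * d := mul_nonneg hp0 (by positivity)
    simp [hc_def]; linarith
  obtain ⟨K0, hK0⟩ := exists_nat_ge (max 2 (max (|s| / c) (2 * |s|)))
  refine ⟨K0 + 2, fun k hk A hA => ?_⟩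
  have hk2 : 2 ≤ k := by omega
  -- basic real-number facts
  set x : ℝ := (d : ℝ) ^ k with hx_def
  have hx0 : 0 < x := by positivity
  have hxk : (k : ℝ) < x := by
    calc (k : ℝ) < (2 : ℝ) ^ k := by exact_mod_cast (Nat.lt_two_pow_self : k < 2 ^ k)
      _ ≤ (d : ℝ) ^ k := by
          apply pow_le_pow_left₀ (by norm_num)
          exact_mod_cast hd
  have hxK0 : (K0 : ℝ) ≤ x := by
    have : (K0 : ℝ) ≤ (k : ℝ) := by exact_mod_cast (by omega : K0 ≤ k)
    linarith
  have hx2 : (2 : ℝ) ≤ x := le_trans (le_trans (le_max_left _ _) hK0) hxK0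
  have hxsc : |s| ≤ c * x := by
    have h1 : |s| / c ≤ x :=
      le_trans (le_trans (le_max_left _ _) (le_trans (le_max_right _ _) hK0)) hxK0
    calc |s| = (|s| / c) * c := by field_simp
      _ ≤ x * c := by apply mul_le_mul_of_nonneg_right h1 (le_of_lt hc)
      _ = c * x := mul_comm _ _
  have hxs2 : 2 * |s| ≤ x :=
    le_trans (le_trans (le_max_right _ _) (le_trans (le_max_right _ _) hK0)) hxK0
  set q : ℝ := qparam d p s k with hq_def
  have hq_eq : q = c / x + s / x ^ 2 := by
    rw [hq_def, qparam, hx_def]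
    congr 1
    rw [two_mul, pow_add, sq]
  have habs : -|s| ≤ s := neg_abs_le s
  have habs' : s ≤ |s| := le_abs_self s
  have hq0 : 0 ≤ q := by
    rw [hq_eq]
    have h1 : 0 ≤ c * x + s := by nlinarith
    have h2 : c / x + s / x ^ 2 = (c * x + s) / x ^ 2 := by field_simp
    rw [h2]
    positivity
  have hq1 : q ≤ 1 := by
    rw [hq_eq]
    have h2 : c / x + s / x ^ 2 = (c * x + s) / x ^ 2 := by field_simp
    rw [h2, div_le_one (by positivity)]
    nlinarith
  have hxq : x * q ≤ 2 * c := by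
    rw [hq_eq]
    have h2 : x * (c / x + s / x ^ 2) = c + s / x := by field_simp
    rw [h2]
    have : s / x ≤ c := by
      rw [div_le_iff₀ hx0]
      nlinarith
    linarith
  have hperc : IsPercolation d k p q (μ k) := hμ k hk2 ⟨hq0, hq1⟩
  refine le_trans (row_sum_le_aux hperc hk2 A hA) ?_
  -- now bound the ENNReal constant
  have hkey : (1 - (d : ℝ≥0∞) * ENNReal.ofReal p)⁻¹
      * ((d : ℝ≥0∞) ^ k * ENNReal.ofReal q) ≤ 2 := by
    have e1 : (d : ℝ≥0∞) * ENNReal.ofReal p = ENNReal.ofReal (p * d) := by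
      rw [← ENNReal.ofReal_natCast d, ← ENNReal.ofReal_mul (by positivity), mul_comm]
    have e2 : (1 : ℝ≥0∞) - ENNReal.ofReal (p * d) = ENNReal.ofReal c := by
      rw [hc_def, ENNReal.ofReal_sub 1 (mul_nonneg hp0 (by positivity)), ENNReal.ofReal_one]
    have e3 : (d : ℝ≥0∞) ^ k = ENNReal.ofReal x := by
      rw [hx_def, ← ENNReal.ofReal_natCast d, ← ENNReal.ofReal_pow (by positivity)]
    rw [e1, e2, e3, ← ENNReal.ofReal_mul (le_of_lt hx0)]
    calc (ENNReal.ofReal c)⁻¹ * ENNReal.ofReal (x * q)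
        ≤ (ENNReal.ofReal c)⁻¹ * ENNReal.ofReal (2 * c) :=
          mul_le_mul_right (ENNReal.ofReal_le_ofReal hxq) _
      _ = (ENNReal.ofReal c)⁻¹ * (2 * ENNReal.ofReal c) := by
          rw [ENNReal.ofReal_mul (by norm_num), ENNReal.ofReal_ofNat]
      _ = 2 * ((ENNReal.ofReal c)⁻¹ * ENNReal.ofReal c) := by ring
      _ = 2 := by
          rw [ENNReal.inv_mul_cancel (by simpa using hc) ENNReal.ofReal_ne_top, mul_one]
  calc ((A.encard : ℕ∞) : ℝ≥0∞) * ((1 - (d : ℝ≥0∞) * ENNReal.ofReal p)⁻¹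
        * ((d : ℝ≥0∞) ^ k * ENNReal.ofReal q))
      ≤ ((A.encard : ℕ∞) : ℝ≥0∞) * 2 := mul_le_mul_right hkey _
    _ = 2 * ((A.encard : ℕ∞) : ℝ≥0∞) := mul_comm _ _
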